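/- Let f : (0,∞)^k → (0,∞) be globally operator monotone. Then the Jensen-type inequality W*f(X)W ≤ f(W*XW) holds also for contractions W : E → K (‖W‖ ≤ 1) between finite-dimensional Hilbert spaces, with the convention f(0) := 0, whenever X is a commuting k-tuple of positive invertible operators on K and W*XW is a commuting k-tuple of positive invertible operators on E. -/

import Mathlib

open Matrix
open scoped ComplexOrder

/-- Square complex matrices of size `d`. -/
abbrev Mat (d : ℕ) := Matrix (Fin d) (Fin d) ℂ

/-- Loewner order: `A ≤ B` iff `B - A` is positive semi-definite. -/
def Loewner {d : ℕ} (A B : Mat d) : Prop := (B - A).PosSemidef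

/-- The diagonal complex matrix with real entries `v`. -/
noncomputable def cDiag {d : ℕ} (v : Fin d → ℝ) : Mat d :=
  Matrix.diagonal (fun j => (v j : ℂ))

/-- `JointDiag X U a` : the `k`-tuple `X` of matrices is jointly diagonalized by
the unitary `U` with (strictly positive) joint eigenvalue lists `a i`; this
encodes that `X` is a pairwise commuting `k`-tuple of positive invertible
operators together with a joint spectral decomposition `X i = Uᴴ (diag (a i)) U`. -/
def JointDiag {k d : ℕ} (X : Fin k → Mat d) (U : Mat d) (a : Fin k → Fin d → ℝ) : Prop :=
  U ∈ Matrix.unitaryGroup (Fin d) ℂ ∧ (∀ i j, 0 < a i j) ∧ ∀ i, X i = Uᴴ * cDiag (a i) * U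

/-- The value `f(X)` of a real function `f : (0,∞)^k → ℝ` on the commuting tuple
jointly diagonalized as `X i = Uᴴ (diag (a i)) U`, via joint functional calculus:
`f(X) = Uᴴ f(Λ) U`. -/
noncomputable def applyF {k d : ℕ} (f : (Fin k → ℝ) → ℝ) (U : Mat d)
    (a : Fin k → Fin d → ℝ) : Mat d :=
  Uᴴ * cDiag (fun j => f (fun i => a i j)) * U

/-- `f : (0,∞)^k → (0,∞)` is globally operator monotone: for all commuting
`k`-tuples `X ≤ Y` (coordinatewise Loewner order) of positive invertible
matrices, `f(X) ≤ f(Y)`, where `f` is applied through (any) joint spectral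
decompositions. -/
def GloballyOpMonotone (k : ℕ) (f : (Fin k → ℝ) → ℝ) : Prop :=
  (∀ x : Fin k → ℝ, (∀ i, 0 < x i) → 0 < f x) ∧
  ∀ (d : ℕ) (X Y : Fin k → Mat d) (U V : Mat d) (a b : Fin k → Fin d → ℝ),
    JointDiag X U a → JointDiag Y V b → (∀ i, Loewner (X i) (Y i)) →
    Loewner (applyF f U a) (applyF f V b)

noncomputable section JSAux

set_option linter.unusedSectionVars false

variable {m n : Type*} [Fintype m] [Fintype n] [DecidableEq m] [DecidableEq n]

lemma js_smul_one_diag (r : ℂ) : r • (1 : Matrix n n ℂ) = diagonal fun _ => r := by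
  ext i j
  by_cases h : i = j <;> simp [h, Matrix.diagonal, Matrix.one_apply]

lemma js_smul {M : Matrix n n ℂ} (hM : M.PosSemidef) {r : ℝ} (hr : 0 ≤ r) :
    ((r : ℂ) • M).PosSemidef := by
  refine Matrix.PosSemidef.of_dotProduct_mulVec_nonneg ?_ ?_
  · unfold Matrix.IsHermitian
    rw [conjTranspose_smul, hM.1.eq]
    congr 1
    simp [Complex.star_def, Complex.conj_ofReal]
  · intro x
    rw [smul_mulVec, dotProduct_smul, smul_eq_mul]
    exact mul_nonneg (by exact_mod_cast hr) (hM.dotProduct_mulVec_nonneg x)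

lemma js_fromBlocks_psd {A : Matrix m m ℂ} {D : Matrix n n ℂ}
    (hA : A.PosSemidef) (hD : D.PosSemidef) :
    (fromBlocks A 0 0 D).PosSemidef := by
  have e1 : fromRows (1 : Matrix m m ℂ) (0 : Matrix n m ℂ) * A *
      (fromRows (1 : Matrix m m ℂ) (0 : Matrix n m ℂ))ᴴ = fromBlocks A 0 0 0 := by
    rw [conjTranspose_fromRows_eq_fromCols_conjTranspose, fromRows_mul,
      Matrix.one_mul, Matrix.zero_mul, fromRows_mul_fromCols]
    simp
  have e2 : fromRows (0 : Matrix m n ℂ) (1 : Matrix n n ℂ) * D *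
      (fromRows (0 : Matrix m n ℂ) (1 : Matrix n n ℂ))ᴴ = fromBlocks 0 0 0 D := by
    rw [conjTranspose_fromRows_eq_fromCols_conjTranspose, fromRows_mul,
      Matrix.one_mul, Matrix.zero_mul, fromRows_mul_fromCols]
    simp
  have h1 : fromBlocks A 0 0 D = fromBlocks A 0 0 0 + fromBlocks 0 0 0 D := by
    rw [fromBlocks_add]; simp
  rw [h1, ← e1, ← e2]
  exact (hA.mul_mul_conjTranspose_same _).add (hD.mul_mul_conjTranspose_same _)

lemma js_exists_bound {M : Matrix n n ℂ} (hM : M.IsHermitian) :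
    ∃ c : ℝ, 0 < c ∧ ((c : ℂ) • (1 : Matrix n n ℂ) - M).PosSemidef := by
  classical
  set c : ℝ := (∑ i, |hM.eigenvalues i|) + 1 with hc
  have hcpos : 0 < c := by
    have : (0:ℝ) ≤ ∑ i, |hM.eigenvalues i| :=
      Finset.sum_nonneg fun i _ => abs_nonneg _
    linarith
  refine ⟨c, hcpos, ?_⟩
  have hev : ∀ i, hM.eigenvalues i ≤ c := by
    intro i
    have h1 : |hM.eigenvalues i| ≤ ∑ j, |hM.eigenvalues j| :=
      Finset.single_le_sum (f := fun j => |hM.eigenvalues j|)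
        (fun j _ => abs_nonneg _) (Finset.mem_univ i)
    have := le_abs_self (hM.eigenvalues i)
    linarith
  have hU : (hM.eigenvectorUnitary : Matrix n n ℂ) *
      (star hM.eigenvectorUnitary : Matrix n n ℂ) = 1 := by
    exact_mod_cast hM.eigenvectorUnitary.2.2
  have key : (c : ℂ) • (1 : Matrix n n ℂ) - M
      = (hM.eigenvectorUnitary : Matrix n n ℂ) *
          (diagonal fun i => ((c - hM.eigenvalues i : ℝ) : ℂ)) *
          (star hM.eigenvectorUnitary : Matrix n n ℂ) := by
    conv_lhs => rw [hM.spectral_theorem, Unitary.conjStarAlgAut_apply]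
    have h1 : (c : ℂ) • (1 : Matrix n n ℂ)
        = (hM.eigenvectorUnitary : Matrix n n ℂ) *
            (diagonal fun _ => (c : ℂ)) * (star hM.eigenvectorUnitary : Matrix n n ℂ) := by
      rw [← js_smul_one_diag (c:ℂ), Matrix.mul_smul, Matrix.mul_one, Matrix.smul_mul, hU]
    rw [h1, ← Matrix.sub_mul, ← Matrix.mul_sub, diagonal_sub]
    congr 2
    funext i
    simp [Function.comp]
  rw [key]
  have hdiag : (diagonal fun i => ((c - hM.eigenvalues i : ℝ) : ℂ)).PosSemidef := by
    rw [posSemidef_diagonal_iff]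
    intro i
    have h2 : (0:ℝ) ≤ c - hM.eigenvalues i := by have := hev i; linarith
    exact_mod_cast h2
  simpa [Matrix.star_eq_conjTranspose] using hdiag.mul_mul_conjTranspose_same (hM.eigenvectorUnitary : Matrix n n ℂ)

lemma js_completion {dK dE : ℕ} (V₀ : Matrix (Fin dK ⊕ Fin dE) (Fin dE) ℂ)
    (h : V₀ᴴ * V₀ = 1) :
    ∃ Y : Matrix (Fin dK ⊕ Fin dE) (Fin dK) ℂ,
      (fromCols Y V₀)ᴴ * (fromCols Y V₀) = 1 ∧
      (fromCols Y V₀) * (fromCols Y V₀)ᴴ = 1 := by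
  classical
  let v : (Fin dK ⊕ Fin dE) → EuclideanSpace ℂ (Fin dK ⊕ Fin dE) := fun q =>
    Sum.elim (fun _ => (0 : EuclideanSpace ℂ (Fin dK ⊕ Fin dE)))
      (fun j => (WithLp.toLp 2 (fun p => V₀ p j) : EuclideanSpace ℂ (Fin dK ⊕ Fin dE))) q
  have hcard : Module.finrank ℂ (EuclideanSpace ℂ (Fin dK ⊕ Fin dE))
      = Fintype.card (Fin dK ⊕ Fin dE) := finrank_euclideanSpace
  have horth : Orthonormal ℂ
      ((Set.range (Sum.inr : Fin dE → Fin dK ⊕ Fin dE)).restrict v) := by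
    rw [orthonormal_iff_ite]
    rintro ⟨q1, hq1⟩ ⟨q2, hq2⟩
    obtain ⟨i, rfl⟩ := hq1
    obtain ⟨j, rfl⟩ := hq2
    have hinner : (inner ℂ (v (Sum.inr i)) (v (Sum.inr j)) : ℂ) = (V₀ᴴ * V₀) i j := by
      simp [v, PiLp.inner_apply, RCLike.inner_apply, Matrix.mul_apply,
        Matrix.conjTranspose_apply, mul_comm]
    show (inner ℂ (v (Sum.inr i)) (v (Sum.inr j)) : ℂ) = _
    rw [hinner, h, Matrix.one_apply]
    by_cases hij : i = j <;> simp [hij]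
    exact fun hc => hij (Sum.inr_injective (congrArg Subtype.val hc))
  obtain ⟨bB, hbB⟩ := horth.exists_orthonormalBasis_extension_of_card_eq hcard
  refine ⟨Matrix.of (fun p q => (bB (Sum.inl q)) p), ?_⟩
  have h1 : (fromCols (Matrix.of (fun p q => (bB (Sum.inl q)) p)) V₀)ᴴ *
      (fromCols (Matrix.of (fun p q => (bB (Sum.inl q)) p)) V₀) = 1 := by
    have hcol : ∀ p q, fromCols (Matrix.of (fun p q => (bB (Sum.inl q)) p)) V₀ p q
        = bB q p := by
      intro p q
      cases q with
      | inl q => rfl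
      | inr q =>
        have := hbB (Sum.inr q) ⟨q, rfl⟩
        have h2 : V₀ p q = v (Sum.inr q) p := rfl
        rw [show fromCols (Matrix.of (fun p q => (bB (Sum.inl q)) p)) V₀ p (Sum.inr q)
            = V₀ p q from rfl, h2, ← this]
    have hON := bB.orthonormal
    rw [orthonormal_iff_ite] at hON
    ext q q'
    rw [Matrix.mul_apply]
    have : ∑ p, ((fromCols (Matrix.of (fun p q => (bB (Sum.inl q)) p)) V₀)ᴴ) q p *
        (fromCols (Matrix.of (fun p q => (bB (Sum.inl q)) p)) V₀) p q'
        = (inner ℂ (bB q) (bB q') : ℂ) := by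
      rw [PiLp.inner_apply]
      congr 1
      funext p
      rw [Matrix.conjTranspose_apply, hcol, hcol]
      simp [RCLike.inner_apply, mul_comm]
    rw [this, hON q q', Matrix.one_apply]
  exact ⟨h1, mul_eq_one_comm.mp h1⟩

lemma js_conj3 {l : Type*} [Fintype l] (S A : Matrix m m ℂ) (J : Matrix m l ℂ) :
    Jᴴ * (Sᴴ * A * S) * J = (S * J)ᴴ * A * (S * J) := by
  rw [conjTranspose_mul]
  simp only [Matrix.mul_assoc]

lemma js_fromBlocks_sub {l o : Type*} {A A' : Matrix m l ℂ} {B B' : Matrix m o ℂ}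
    {C C' : Matrix n l ℂ} {D D' : Matrix n o ℂ} :
    fromBlocks A B C D - fromBlocks A' B' C' D'
      = fromBlocks (A - A') (B - B') (C - C') (D - D') := by
  ext (i | i) (j | j) <;> simp [Matrix.sub_apply]

end JSAux

lemma js_cdiag_psd {d : ℕ} {v : Fin d → ℝ} (hv : ∀ j, 0 ≤ v j) : (cDiag v).PosSemidef := by
  unfold cDiag
  rw [posSemidef_diagonal_iff]
  intro j
  exact_mod_cast hv j

set_option maxHeartbeats 2000000 in
lemma js_key {k dE dK : ℕ} (hdE0 : 0 < dE) (f : (Fin k → ℝ) → ℝ)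
    (hf : GloballyOpMonotone k f)
    (W : Matrix (Fin dK) (Fin dE) ℂ) (hW : (1 - Wᴴ * W).PosSemidef)
    (X : Fin k → Mat dK) (U : Mat dK) (a : Fin k → Fin dK → ℝ) (hX : JointDiag X U a)
    (V : Mat dE) (b : Fin k → Fin dE → ℝ) (hWXW : JointDiag (fun i => Wᴴ * X i * W) V b)
    (c : ℝ) (hc0 : 0 < c) (hc1 : c < 1) :
    (applyF f V b - (c:ℂ) • (Wᴴ * applyF f U a * W)).PosSemidef := by
  classical
  obtain ⟨hU, ha, hXU⟩ := hX
  obtain ⟨hV, hb, hTV⟩ := hWXW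
  have hUU : Uᴴ * U = 1 := by
    simpa [Matrix.star_eq_conjTranspose] using Matrix.mem_unitaryGroup_iff'.mp hU
  have hVV : Vᴴ * V = 1 := by
    simpa [Matrix.star_eq_conjTranspose] using Matrix.mem_unitaryGroup_iff'.mp hV
  have h1c : 0 < 1 - c := by linarith
  have hstarθ : star ((Real.sqrt c : ℝ):ℂ) = ((Real.sqrt c : ℝ):ℂ) := by
    simp [Complex.star_def, Complex.conj_ofReal]
  have hθθ : ((Real.sqrt c : ℝ):ℂ) * ((Real.sqrt c : ℝ):ℂ) = (c:ℂ) := by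
    rw [← Complex.ofReal_mul, Real.mul_self_sqrt hc0.le]
  have hG : (1 - (c:ℂ) • (Wᴴ * W)).PosSemidef := by
    have heq : 1 - (c:ℂ) • (Wᴴ * W)
        = ((1 - c : ℝ):ℂ) • (1 : Mat dE) + (c:ℂ) • (1 - Wᴴ * W) := by
      push_cast
      module
    rw [heq]
    exact (js_smul Matrix.PosSemidef.one h1c.le).add (js_smul hW hc0.le)
  set P : Mat dE := (open scoped MatrixOrder in CFC.sqrt (1 - (c:ℂ) • (Wᴴ * W))) with hPdef
  have hPpsd : P.PosSemidef := by
    rw [hPdef]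
    open scoped MatrixOrder in exact Matrix.nonneg_iff_posSemidef.mp (CFC.sqrt_nonneg _)
  have hPh : Pᴴ = P := hPpsd.1
  have hPP : P * P = 1 - (c:ℂ) • (Wᴴ * W) :=
    (open scoped MatrixOrder in CFC.sqrt_mul_sqrt_self _ hG.nonneg)
  have hPPpsd : (P * P).PosSemidef := by
    have h2 : Pᴴ * P = P * P := by rw [hPh]
    rw [← h2]
    exact posSemidef_conjTranspose_mul_self P
  clear_value P
  set V0 : Matrix (Fin dK ⊕ Fin dE) (Fin dE) ℂ :=
    fromRows (((Real.sqrt c : ℝ):ℂ) • W) P with hV0def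
  have hV0V0 : V0ᴴ * V0 = 1 := by
    rw [hV0def, conjTranspose_fromRows_eq_fromCols_conjTranspose,
      fromCols_mul_fromRows, conjTranspose_smul, hPh, hPP,
      Matrix.smul_mul, Matrix.mul_smul, smul_smul, hstarθ, hθθ]
    abel
  obtain ⟨Y, hUh1, hUh2⟩ := js_completion V0 hV0V0
  set Uh : Matrix (Fin dK ⊕ Fin dE) (Fin dK ⊕ Fin dE) ℂ := fromCols Y V0 with hUhdef
  -- constants
  have hne : Nonempty (Fin dE) := ⟨⟨0, hdE0⟩⟩
  set μ : Fin k → ℝ := fun i => Finset.univ.inf' Finset.univ_nonempty (b i) with hμdef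
  have hμpos : ∀ i, 0 < μ i := by
    intro i
    rw [hμdef]
    rw [Finset.lt_inf'_iff]
    exact fun j _ => hb i j
  have hμle : ∀ i j, μ i ≤ b i j := by
    intro i j
    rw [hμdef]
    exact Finset.inf'_le _ (Finset.mem_univ j)
  set α : Fin k → ℝ := fun i => (1 - c) * μ i / 2 with hαdef
  have hαpos : ∀ i, 0 < α i := by
    intro i
    rw [hαdef]
    have := hμpos i
    positivity
  -- big-space operators
  set Xh : Fin k → Matrix (Fin dK ⊕ Fin dE) (Fin dK ⊕ Fin dE) ℂ :=
    fun i => fromBlocks (X i) 0 0 ((α i : ℂ) • 1) with hXhdef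
  have hXpsd : ∀ i, (X i).PosSemidef := by
    intro i
    rw [hXU i]
    exact (js_cdiag_psd (fun j => (ha i j).le)).conjTranspose_mul_mul_same U
  have hXhpsd : ∀ i, (Xh i).PosSemidef := by
    intro i
    exact js_fromBlocks_psd (hXpsd i) (js_smul Matrix.PosSemidef.one (hαpos i).le)
  set B : Fin k → Matrix (Fin dK) (Fin dE) ℂ := fun i => Yᴴ * Xh i * V0 with hBdef
  set H : Fin k → Mat dK :=
    fun i => Yᴴ * Xh i * Y + (((α i)⁻¹ : ℝ) : ℂ) • (B i * (B i)ᴴ) with hHdef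
  have hHpsd : ∀ i, (H i).PosSemidef := by
    intro i
    exact ((hXhpsd i).conjTranspose_mul_mul_same Y).add
      (js_smul (posSemidef_self_mul_conjTranspose _) (inv_nonneg.mpr (hαpos i).le))
  have hlamex : ∀ i, ∃ lam : ℝ, 0 < lam ∧
      ((lam:ℂ) • (1 : Mat dK) - H i).PosSemidef := fun i => js_exists_bound (hHpsd i).1
  choose lam hlampos hlampsd using hlamex
  set Zh : Fin k → Matrix (Fin dK ⊕ Fin dE) (Fin dK ⊕ Fin dE) ℂ :=
    fun i => fromBlocks ((lam i : ℂ) • 1) 0 0 (Wᴴ * X i * W) with hZhdef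
  -- block decomposition of the compressed operator
  have hSblocks : ∀ i, Uhᴴ * Xh i * Uh
      = fromBlocks (Yᴴ * Xh i * Y) (B i) ((B i)ᴴ) (V0ᴴ * Xh i * V0) := by
    intro i
    have hXhh : (Xh i)ᴴ = Xh i := (hXhpsd i).1
    have hB2 : (V0ᴴ * Xh i) * Y = (B i)ᴴ := by
      rw [hBdef]
      simp only [conjTranspose_mul, conjTranspose_conjTranspose, hXhh, Matrix.mul_assoc]
    rw [hUhdef, conjTranspose_fromCols_eq_fromRows_conjTranspose, fromRows_mul,
      fromRows_mul_fromCols, hB2]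
  have hV0X : ∀ i, V0ᴴ * Xh i * V0
      = (c:ℂ) • (Wᴴ * X i * W) + ((α i : ℝ):ℂ) • (P * P) := by
    intro i
    rw [hV0def]
    simp only [hXhdef]
    rw [conjTranspose_fromRows_eq_fromCols_conjTranspose, Matrix.mul_assoc,
      fromBlocks_mul_fromRows, fromCols_mul_fromRows]
    simp only [Matrix.zero_mul, Matrix.mul_zero, add_zero, zero_add, conjTranspose_smul,
      hstarθ, Matrix.smul_mul, Matrix.mul_smul, smul_smul, hθθ, hPh, Matrix.one_mul,
      Matrix.mul_one, Matrix.mul_assoc, smul_zero]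
  -- corner estimates
  have hTμ : ∀ i, (Wᴴ * X i * W - ((μ i : ℝ):ℂ) • 1).PosSemidef := by
    intro i
    have h2 : cDiag (fun j => b i j - μ i) = cDiag (b i) - ((μ i:ℝ):ℂ) • 1 := by
      unfold cDiag
      rw [js_smul_one_diag, diagonal_sub]
      congr 1
      funext j
      push_cast
      ring
    have heq : Wᴴ * X i * W - ((μ i : ℝ):ℂ) • 1
        = Vᴴ * cDiag (fun j => b i j - μ i) * V := by
      rw [h2, Matrix.mul_sub, Matrix.sub_mul, ← hTV i]
      congr 1
      rw [Matrix.mul_smul, Matrix.mul_one, Matrix.smul_mul, hVV]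
    rw [heq]
    exact (js_cdiag_psd (fun j => by have := hμle i j; linarith)).conjTranspose_mul_mul_same V
  have hE2 : ∀ i, (Wᴴ * X i * W - V0ᴴ * Xh i * V0 - ((α i : ℝ):ℂ) • 1).PosSemidef := by
    intro i
    have hα2 : (α i : ℝ) = (1 - c) * μ i / 2 := by rw [hαdef]
    have heq : Wᴴ * X i * W - V0ᴴ * Xh i * V0 - ((α i : ℝ):ℂ) • 1
        = ((1 - c : ℝ):ℂ) • (Wᴴ * X i * W - ((μ i:ℝ):ℂ) • 1)
          + ((α i * c : ℝ):ℂ) • (Wᴴ * W) := by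
      rw [hV0X i, hPP]
      push_cast [hα2]
      module
    rw [heq]
    exact (js_smul (hTμ i) h1c.le).add
      (js_smul (posSemidef_conjTranspose_mul_self W) (mul_nonneg (hαpos i).le hc0.le))
  have hZS : ∀ i, (Zh i - Uhᴴ * Xh i * Uh).PosSemidef := by
    intro i
    have hs0 : 0 < Real.sqrt (α i) := Real.sqrt_pos.mpr (hαpos i)
    have hss : ((Real.sqrt (α i):ℝ):ℂ) * ((Real.sqrt (α i):ℝ):ℂ) = ((α i : ℝ):ℂ) := by
      rw [← Complex.ofReal_mul, Real.mul_self_sqrt (hαpos i).le]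
    have hsinv : (((Real.sqrt (α i))⁻¹:ℝ):ℂ) * (((Real.sqrt (α i))⁻¹:ℝ):ℂ)
        = (((α i)⁻¹ : ℝ):ℂ) := by
      rw [← Complex.ofReal_mul, ← mul_inv, Real.mul_self_sqrt (hαpos i).le]
    have hss1 : (((Real.sqrt (α i))⁻¹:ℝ):ℂ) * ((Real.sqrt (α i):ℝ):ℂ) = 1 := by
      rw [← Complex.ofReal_mul, inv_mul_cancel₀ hs0.ne']
      simp
    have hss1' : ((Real.sqrt (α i):ℝ):ℂ) * (((Real.sqrt (α i))⁻¹:ℝ):ℂ) = 1 := by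
      rw [← Complex.ofReal_mul, mul_inv_cancel₀ hs0.ne']
      simp
    set L : Matrix (Fin dE) (Fin dK ⊕ Fin dE) ℂ :=
      fromCols (-((((Real.sqrt (α i))⁻¹ : ℝ):ℂ) • (B i)ᴴ))
        (((Real.sqrt (α i):ℝ):ℂ) • 1) with hLdef
    have hLL : Lᴴ * L = fromBlocks ((((α i)⁻¹:ℝ):ℂ) • (B i * (B i)ᴴ)) (-(B i)) (-((B i)ᴴ))
        (((α i:ℝ):ℂ) • 1) := by
      rw [hLdef, conjTranspose_fromCols_eq_fromRows_conjTranspose,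
        fromRows_mul_fromCols]
      simp only [conjTranspose_neg, conjTranspose_smul, conjTranspose_conjTranspose,
        conjTranspose_one, Complex.star_def, Complex.conj_ofReal, Matrix.neg_mul,
        Matrix.mul_neg, neg_neg, Matrix.smul_mul, Matrix.mul_smul, smul_smul,
        Matrix.one_mul, Matrix.mul_one, smul_neg, neg_smul]
      rw [hsinv, hss, hss1, hss1']
      simp only [one_smul]
    have hsplit : Zh i - Uhᴴ * Xh i * Uh
        = fromBlocks ((lam i:ℂ) • 1 - H i) 0 0
            (Wᴴ * X i * W - V0ᴴ * Xh i * V0 - ((α i:ℝ):ℂ) • 1) + Lᴴ * L := by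
      rw [hSblocks i, hLL]
      simp only [hZhdef]
      rw [js_fromBlocks_sub, fromBlocks_add]
      rw [fromBlocks_inj]
      refine ⟨?_, ?_, ?_, ?_⟩
      · rw [hHdef]
        beta_reduce
        abel
      · abel
      · abel
      · abel
    rw [hsplit]
    exact (js_fromBlocks_psd (hlampsd i) (hE2 i)).add (posSemidef_conjTranspose_mul_self L)
  -- joint diagonalization data
  set Ut : Matrix (Fin dK ⊕ Fin dE) (Fin dK ⊕ Fin dE) ℂ := fromBlocks U 0 0 1 with hUtdef
  have hUt1 : Utᴴ * Ut = 1 := by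
    rw [hUtdef, fromBlocks_conjTranspose, fromBlocks_multiply]
    simp [hUU, fromBlocks_one]
  set cU : Matrix (Fin dK ⊕ Fin dE) (Fin dK ⊕ Fin dE) ℂ := Ut * Uh with hcUdef
  have hcU1 : cUᴴ * cU = 1 := by
    rw [hcUdef, conjTranspose_mul]
    calc Uhᴴ * Utᴴ * (Ut * Uh) = Uhᴴ * (Utᴴ * Ut) * Uh := by
          simp only [Matrix.mul_assoc]
      _ = 1 := by rw [hUt1, Matrix.mul_one, hUh1]
  set cV : Matrix (Fin dK ⊕ Fin dE) (Fin dK ⊕ Fin dE) ℂ := fromBlocks 1 0 0 V with hcVdef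
  have hcV1 : cVᴴ * cV = 1 := by
    rw [hcVdef, fromBlocks_conjTranspose, fromBlocks_multiply]
    simp [hVV, fromBlocks_one]
  have hSdiag : ∀ i, Uhᴴ * Xh i * Uh
      = cUᴴ * diagonal (fun p => ((Sum.elim (a i) (fun _ => α i) p : ℝ):ℂ)) * cU := by
    intro i
    have hd : diagonal (fun p => ((Sum.elim (a i) (fun _ => α i) p : ℝ):ℂ))
        = fromBlocks (cDiag (a i)) 0 0 (((α i : ℝ):ℂ) • (1 : Mat dE)) := by
      rw [js_smul_one_diag (n := Fin dE) (((α i : ℝ):ℂ))]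
      unfold cDiag
      rw [fromBlocks_diagonal]
      congr 1
      funext p
      cases p <;> rfl
    have hXhU : Xh i
        = Utᴴ * diagonal (fun p => ((Sum.elim (a i) (fun _ => α i) p : ℝ):ℂ)) * Ut := by
      rw [hd, hUtdef, fromBlocks_conjTranspose, fromBlocks_multiply, fromBlocks_multiply]
      simp only [Matrix.mul_zero, Matrix.zero_mul, Matrix.mul_one, Matrix.one_mul,
        add_zero, zero_add, conjTranspose_zero, conjTranspose_one]
      simp only [hXhdef]
      rw [fromBlocks_inj]
      exact ⟨hXU i, rfl, rfl, rfl⟩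
    rw [hXhU, hcUdef, conjTranspose_mul]
    simp only [Matrix.mul_assoc]
  have hZdiag : ∀ i, Zh i
      = cVᴴ * diagonal (fun p => ((Sum.elim (fun _ => lam i) (b i) p : ℝ):ℂ)) * cV := by
    intro i
    have hd : diagonal (fun p => ((Sum.elim (fun _ => lam i) (b i) p : ℝ):ℂ))
        = fromBlocks ((lam i : ℂ) • (1 : Mat dK)) 0 0 (cDiag (b i)) := by
      rw [js_smul_one_diag (n := Fin dK) ((lam i : ℂ))]
      unfold cDiag
      rw [fromBlocks_diagonal]
      congr 1
      funext p
      cases p <;> rfl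
    rw [hd, hcVdef, fromBlocks_conjTranspose, fromBlocks_multiply, fromBlocks_multiply]
    simp only [Matrix.mul_zero, Matrix.zero_mul, Matrix.mul_one, Matrix.one_mul,
      add_zero, zero_add, conjTranspose_zero, conjTranspose_one]
    simp only [hZhdef]
    rw [fromBlocks_inj]
    exact ⟨rfl, rfl, rfl, hTV i⟩
  -- transport to Fin (dK + dE) and apply global operator monotonicity
  set e : (Fin dK ⊕ Fin dE) ≃ Fin (dK + dE) := finSumFinEquiv with hedef
  set af : Fin k → Fin (dK + dE) → ℝ :=
    fun i => (Sum.elim (a i) (fun _ => α i)) ∘ e.symm with hafdef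
  set bf : Fin k → Fin (dK + dE) → ℝ :=
    fun i => (Sum.elim (fun _ => lam i) (b i)) ∘ e.symm with hbfdef
  have hJD1 : JointDiag (fun i => (Uhᴴ * Xh i * Uh).submatrix e.symm e.symm)
      (cU.submatrix e.symm e.symm) af := by
    refine ⟨?_, ?_, ?_⟩
    · rw [Matrix.mem_unitaryGroup_iff', Matrix.star_eq_conjTranspose, conjTranspose_submatrix,
        Matrix.submatrix_mul_equiv, hcU1, submatrix_one_equiv]
    · intro i j
      simp only [hafdef, Function.comp_apply]
      rcases e.symm j with p | p
      · exact ha i p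
      · exact hαpos i
    · intro i
      show (Uhᴴ * Xh i * Uh).submatrix e.symm e.symm = _
      have hd2 : cDiag (af i)
          = (diagonal (fun p => ((Sum.elim (a i) (fun _ => α i) p : ℝ):ℂ))).submatrix
              e.symm e.symm := by
        rw [submatrix_diagonal_equiv]
        rfl
      rw [hSdiag i, hd2, conjTranspose_submatrix,
        Matrix.submatrix_mul_equiv, Matrix.submatrix_mul_equiv]
  have hJD2 : JointDiag (fun i => (Zh i).submatrix e.symm e.symm)
      (cV.submatrix e.symm e.symm) bf := by
    refine ⟨?_, ?_, ?_⟩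
    · rw [Matrix.mem_unitaryGroup_iff', Matrix.star_eq_conjTranspose, conjTranspose_submatrix,
        Matrix.submatrix_mul_equiv, hcV1, submatrix_one_equiv]
    · intro i j
      simp only [hbfdef, Function.comp_apply]
      rcases e.symm j with p | p
      · exact hlampos i
      · exact hb i p
    · intro i
      show (Zh i).submatrix e.symm e.symm = _
      have hd2 : cDiag (bf i)
          = (diagonal (fun p => ((Sum.elim (fun _ => lam i) (b i) p : ℝ):ℂ))).submatrix
              e.symm e.symm := by
        rw [submatrix_diagonal_equiv]
        rfl
      rw [hZdiag i, hd2, conjTranspose_submatrix,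
        Matrix.submatrix_mul_equiv, Matrix.submatrix_mul_equiv]
  have hLoew : ∀ i, Loewner ((Uhᴴ * Xh i * Uh).submatrix e.symm e.symm)
      ((Zh i).submatrix e.symm e.symm) := by
    intro i
    exact (hZS i).submatrix e.symm
  have hmono := hf.2 (dK + dE) _ _ _ _ af bf hJD1 hJD2 hLoew
  -- compression back to E
  set iot : Matrix (Fin dK ⊕ Fin dE) (Fin dE) ℂ := fromRows 0 1 with hiotdef
  set iotf : Matrix (Fin (dK + dE)) (Fin dE) ℂ := iot.submatrix e.symm id with hiotfdef
  have hcomp := hmono.conjTranspose_mul_mul_same iotf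
  set falpha : ℝ := f (fun i => α i) with hfalphadef
  have hfalpha : 0 < falpha := hf.1 _ hαpos
  have hcompgen : ∀ (M : Matrix (Fin dK ⊕ Fin dE) (Fin dK ⊕ Fin dE) ℂ),
      iotfᴴ * (M.submatrix e.symm e.symm) * iotf = iotᴴ * M * iot := by
    intro M
    rw [hiotfdef, conjTranspose_submatrix, Matrix.submatrix_mul_equiv,
      Matrix.submatrix_mul_equiv, Matrix.submatrix_id_id]
  have hAppU : applyF f (cU.submatrix e.symm e.symm) af
      = (cUᴴ * diagonal
            (fun p => ((f (fun i => Sum.elim (a i) (fun _ => α i) p) : ℝ):ℂ)) * cU).submatrix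
          e.symm e.symm := by
    unfold applyF
    have hd : cDiag (fun j => f (fun i => af i j))
        = (diagonal
            (fun p => ((f (fun i => Sum.elim (a i) (fun _ => α i) p) : ℝ):ℂ))).submatrix
          e.symm e.symm := by
      rw [submatrix_diagonal_equiv]
      rfl
    rw [hd, conjTranspose_submatrix, Matrix.submatrix_mul_equiv, Matrix.submatrix_mul_equiv]
  have hUι : cU * iot = fromRows (((Real.sqrt c:ℝ):ℂ) • (U * W)) P := by
    rw [hcUdef, Matrix.mul_assoc, hUhdef, hiotdef, fromCols_mul_fromRows,
      Matrix.mul_zero, Matrix.mul_one, zero_add, hV0def, hUtdef, fromBlocks_mul_fromRows]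
    simp only [Matrix.mul_smul, Matrix.zero_mul, Matrix.one_mul, add_zero, zero_add,
      smul_zero]
  have hDgU : diagonal (fun p => ((f (fun i => Sum.elim (a i) (fun _ => α i) p) : ℝ):ℂ))
      = fromBlocks (cDiag (fun j => f (fun i => a i j))) 0 0 (((falpha : ℝ):ℂ) • (1 : Mat dE)) := by
    rw [js_smul_one_diag (n := Fin dE) (((falpha : ℝ):ℂ))]
    unfold cDiag
    rw [fromBlocks_diagonal]
    congr 1
    funext p
    cases p <;> rfl
  have hcompU : iotfᴴ * applyF f (cU.submatrix e.symm e.symm) af * iotf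
      = (c:ℂ) • (Wᴴ * applyF f U a * W) + ((falpha : ℝ):ℂ) • (P * P) := by
    rw [hAppU, hcompgen, js_conj3, hUι, hDgU, conjTranspose_fromRows_eq_fromCols_conjTranspose,
      Matrix.mul_assoc, fromBlocks_mul_fromRows, fromCols_mul_fromRows]
    unfold applyF
    simp only [conjTranspose_smul, hstarθ, conjTranspose_mul, Matrix.smul_mul,
      Matrix.mul_smul, smul_smul, hθθ, hPh, smul_zero, Matrix.zero_mul, Matrix.mul_zero,
      add_zero, zero_add, Matrix.one_mul, Matrix.mul_one, Matrix.mul_assoc]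
  have hAppV : applyF f (cV.submatrix e.symm e.symm) bf
      = (cVᴴ * diagonal
            (fun p => ((f (fun i => Sum.elim (fun _ => lam i) (b i) p) : ℝ):ℂ)) * cV).submatrix
          e.symm e.symm := by
    unfold applyF
    have hd : cDiag (fun j => f (fun i => bf i j))
        = (diagonal
            (fun p => ((f (fun i => Sum.elim (fun _ => lam i) (b i) p) : ℝ):ℂ))).submatrix
          e.symm e.symm := by
      rw [submatrix_diagonal_equiv]
      rfl
    rw [hd, conjTranspose_submatrix, Matrix.submatrix_mul_equiv, Matrix.submatrix_mul_equiv]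
  have hVι : cV * iot = fromRows 0 V := by
    rw [hcVdef, hiotdef, fromBlocks_mul_fromRows]
    simp
  have hDgV : diagonal (fun p => ((f (fun i => Sum.elim (fun _ => lam i) (b i) p) : ℝ):ℂ))
      = fromBlocks (((f lam : ℝ):ℂ) • (1 : Mat dK)) 0 0
          (cDiag (fun j => f (fun i => b i j))) := by
    rw [js_smul_one_diag (n := Fin dK) (((f lam : ℝ):ℂ))]
    unfold cDiag
    rw [fromBlocks_diagonal]
    congr 1
    funext p
    cases p <;> rfl
  have hcompV : iotfᴴ * applyF f (cV.submatrix e.symm e.symm) bf * iotf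
      = applyF f V b := by
    rw [hAppV, hcompgen, js_conj3, hVι, hDgV, conjTranspose_fromRows_eq_fromCols_conjTranspose,
      Matrix.mul_assoc, fromBlocks_mul_fromRows, fromCols_mul_fromRows]
    unfold applyF
    simp only [conjTranspose_zero, Matrix.zero_mul, Matrix.mul_zero, add_zero, zero_add,
      Matrix.one_mul, Matrix.mul_one, Matrix.mul_assoc]
  have hfinal : (applyF f V b
      - ((c:ℂ) • (Wᴴ * applyF f U a * W) + ((falpha : ℝ):ℂ) • (P * P))).PosSemidef := by
    rw [← hcompU, ← hcompV]
    unfold Loewner at hcomp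
    convert hcomp using 1
    rw [Matrix.mul_sub, Matrix.sub_mul]
  have hfin2 : applyF f V b - (c:ℂ) • (Wᴴ * applyF f U a * W)
      = (applyF f V b - ((c:ℂ) • (Wᴴ * applyF f U a * W) + ((falpha : ℝ):ℂ) • (P * P)))
        + ((falpha : ℝ):ℂ) • (P * P) := by
    abel
  rw [hfin2]
  exact hfinal.add (js_smul hPPpsd hfalpha.le)

/-- for a globally operator monotone `f : (0,∞)^k → (0,∞)` the
Jensen-type inequality `Wᴴ f(X) W ≤ f(Wᴴ X W)` holds also for contractions
`W : E → K` (`‖W‖ ≤ 1`, i.e. `1 - Wᴴ W ≥ 0`) between finite-dimensional Hilbert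
spaces (with the convention `f(0) := 0`), whenever `X` is a commuting `k`-tuple
of positive invertible operators on `K` and `Wᴴ X W` is a commuting `k`-tuple of
positive invertible operators on `E`. -/
theorem stmt6 (k : ℕ) (f : (Fin k → ℝ) → ℝ) (hf : GloballyOpMonotone k f)
    (dE dK : ℕ) (W : Matrix (Fin dK) (Fin dE) ℂ)
    (hW : (1 - Wᴴ * W).PosSemidef)
    (X : Fin k → Mat dK) (U : Mat dK) (a : Fin k → Fin dK → ℝ)
    (hX : JointDiag X U a)
    (V : Mat dE) (b : Fin k → Fin dE → ℝ)
    (hWXW : JointDiag (fun i => Wᴴ * X i * W) V b) :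
    Loewner (Wᴴ * applyF f U a * W) (applyF f V b) := by
  classical
  rcases Nat.eq_zero_or_pos dE with hdE0 | hdE0
  · subst hdE0
    refine Matrix.PosSemidef.of_dotProduct_mulVec_nonneg ?_ ?_
    · funext i j
      exact absurd i.isLt (by omega)
    · intro x
      simp [dotProduct]
  · -- main case
    have hDfaPSD : (cDiag (fun j => f (fun i => a i j))).PosSemidef :=
      js_cdiag_psd (fun j => (hf.1 _ (fun i => hX.2.1 i j)).le)
    have hDfbPSD : (cDiag (fun j => f (fun i => b i j))).PosSemidef :=
      js_cdiag_psd (fun j => (hf.1 _ (fun i => hWXW.2.1 i j)).le)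
    have hF1psd : (applyF f U a).PosSemidef := hDfaPSD.conjTranspose_mul_mul_same U
    have hF2psd : (applyF f V b).PosSemidef := hDfbPSD.conjTranspose_mul_mul_same V
    have hWFW : (Wᴴ * applyF f U a * W).PosSemidef := by
      have h2 : Wᴴ * applyF f U a * W = Wᴴ * (applyF f U a) * W := by
        simp [Matrix.mul_assoc]
      rw [h2]
      exact hF1psd.conjTranspose_mul_mul_same W
    have key := fun (c : ℝ) (hc0 : 0 < c) (hc1 : c < 1) =>
      js_key hdE0 f hf W hW X U a hX V b hWXW c hc0 hc1
    refine Matrix.PosSemidef.of_dotProduct_mulVec_nonneg (hF2psd.1.sub hWFW.1) ?_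
    intro x
    set q1 := star x ⬝ᵥ (Wᴴ * applyF f U a * W) *ᵥ x with hq1def
    set q2 := star x ⬝ᵥ (applyF f V b) *ᵥ x with hq2def
    have h1 : (0:ℂ) ≤ q1 := hWFW.dotProduct_mulVec_nonneg x
    have h2 : ∀ c : ℝ, 0 < c → c < 1 → (c:ℂ) * q1 ≤ q2 := by
      intro c hc0 hc1
      have h3 := (key c hc0 hc1).dotProduct_mulVec_nonneg x
      rw [Matrix.sub_mulVec, dotProduct_sub, smul_mulVec, dotProduct_smul,
        smul_eq_mul] at h3
      exact sub_nonneg.mp h3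
    rw [Matrix.sub_mulVec, dotProduct_sub]
    rw [← hq1def, ← hq2def]
    have h1' := Complex.le_def.mp h1
    have hq1re : 0 ≤ q1.re := by simpa using h1'.1
    have hq1im : q1.im = 0 := by simpa using h1'.2.symm
    have h2' : ∀ c : ℝ, 0 < c → c < 1 → c * q1.re ≤ q2.re ∧ q2.im = 0 := by
      intro c hc0 hc1
      have h4 := Complex.le_def.mp (h2 c hc0 hc1)
      constructor
      · simpa [Complex.mul_re, hq1im] using h4.1
      · have h5 := h4.2
        simp only [Complex.mul_im, Complex.ofReal_re, Complex.ofReal_im, hq1im] at h5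
        simpa using h5.symm
    have hq2im : q2.im = 0 := (h2' (1/2) (by norm_num) (by norm_num)).2
    have hhalf := (h2' (1/2) (by norm_num) (by norm_num)).1
    have hmain : q1.re ≤ q2.re := by
      by_contra hlt
      push_neg at hlt
      have hq1pos : 0 < q1.re := by nlinarith
      have hq : 0 ≤ q2.re / q1.re := div_nonneg (by nlinarith) hq1pos.le
      have hqlt : q2.re / q1.re < 1 := (div_lt_one hq1pos).mpr hlt
      set t : ℝ := (q2.re / q1.re + 1) / 2 with ht
      have ht0 : 0 < t := by rw [ht]; linarith
      have ht1 : t < 1 := by rw [ht]; linarith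
      have htq := (h2' t ht0 ht1).1
      have htgt : q2.re / q1.re < t := by rw [ht]; linarith
      have hcon : q2.re < t * q1.re := by
        have := (div_lt_iff₀ hq1pos).mp htgt
        linarith
      linarith
    rw [Complex.le_def]
    constructor
    · simpa [Complex.sub_re] using sub_nonneg.mpr hmain
    · simp [Complex.sub_im, hq1im, hq2im]
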